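/- Let Φ : ℝ → ℝ be convex and assume s ↦ exp(−Φ(s)) is integrable on (z, ∞) for every z ∈ ℝ. Then the function ℓ₂ : ℝ → ℝ defined by ℓ₂(z) = −log( ∫_{(z,∞)} exp(−Φ(s)) ds ) is convex on ℝ. -/

import Mathlib

open MeasureTheory

lemma convex_add_ineq (Φ : ℝ → ℝ) (hΦ : ConvexOn ℝ Set.univ Φ) (x y s : ℝ)
    (hxy : x ≤ y) (hxs : x ≤ s) :
    Φ y + Φ s ≤ Φ x + Φ (s + (y - x)) := by
  set b := s + (y - x) with hb
  rcases eq_or_lt_of_le (hxs.trans (le_add_of_nonneg_right (by linarith) : s ≤ b)) with h | h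
  · have hyx : y = x := by linarith
    have hsx : s = x := by linarith
    rw [hb, hyx, hsx]; ring_nf; linarith
  · set t : ℝ := (y - x) / (b - x) with ht
    have hbx : 0 < b - x := by linarith
    have ht0 : 0 ≤ t := div_nonneg (by linarith) hbx.le
    have ht1 : t ≤ 1 := by rw [div_le_one hbx]; linarith
    have h1 : Φ y ≤ (1 - t) * Φ x + t * Φ b := by
      have := hΦ.2 (Set.mem_univ x) (Set.mem_univ b) (by linarith : (0:ℝ) ≤ 1 - t) ht0 (by ring)
      have hy : (1 - t) • x + t • b = y := by
        have htb : t * (b - x) = y - x := by rw [ht]; exact div_mul_cancel₀ _ hbx.ne'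
        simp only [smul_eq_mul]; linarith [htb]
      rwa [hy] at this
    have h2 : Φ s ≤ t * Φ x + (1 - t) * Φ b := by
      have := hΦ.2 (Set.mem_univ x) (Set.mem_univ b) ht0 (by linarith : (0:ℝ) ≤ 1 - t) (by ring)
      have hs : t • x + (1 - t) • b = s := by
        have htb : t * (b - x) = y - x := by rw [ht]; exact div_mul_cancel₀ _ hbx.ne'
        simp only [smul_eq_mul]; linarith [htb, hb]
      rwa [hs] at this
    linarith

lemma shift_Ioi_integral (g : ℝ → ℝ) (x y : ℝ) :
    ∫ s in Set.Ioi y, g s = ∫ s in Set.Ioi x, g (s + (y - x)) := by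
  rw [← integral_indicator measurableSet_Ioi, ← integral_indicator measurableSet_Ioi,
    ← integral_add_right_eq_self (fun s => (Set.Ioi y).indicator g s) (y - x)]
  congr 1
  ext s
  by_cases h : x < s
  · rw [Set.indicator_of_mem (by simp; linarith), Set.indicator_of_mem (by simp; linarith)]
  · rw [Set.indicator_of_notMem (by simp; push_neg at h; linarith),
      Set.indicator_of_notMem (by simp; push_neg at h; linarith)]

lemma hasDerivAt_tail (f : ℝ → ℝ) (hc : Continuous f)
    (hint : ∀ z, IntegrableOn f (Set.Ioi z)) (z : ℝ) :
    HasDerivAt (fun x => ∫ s in Set.Ioi x, f s) (-f z) z := by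
  set a := z - 1 with ha
  have split : ∀ u v : ℝ, u ≤ v →
      ∫ s in Set.Ioi u, f s = (∫ s in Set.Ioc u v, f s) + ∫ s in Set.Ioi v, f s := by
    intro u v huv
    have hdisj : Disjoint (Set.Ioc u v) (Set.Ioi v) := by
      rw [Set.disjoint_left]
      intro t ht ht'
      exact absurd ht.2 (not_le.2 ht')
    rw [← setIntegral_union hdisj measurableSet_Ioi
      ((hint u).mono_set Set.Ioc_subset_Ioi_self) (hint v), Set.Ioc_union_Ioi_eq_Ioi huv]
  have key : ∀ x : ℝ, ∫ s in Set.Ioi x, f s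
      = (∫ s in Set.Ioi a, f s) - ∫ t in a..x, f t := by
    intro x
    rcases le_total a x with h | h
    · rw [intervalIntegral.integral_of_le h, split a x h]; ring
    · rw [intervalIntegral.integral_symm, intervalIntegral.integral_of_le h, split x a h]; ring
  have hd : HasDerivAt (fun x => ∫ t in a..x, f t) (f z) z :=
    intervalIntegral.integral_hasDerivAt_right (hc.intervalIntegrable a z)
      (hc.stronglyMeasurableAtFilter _ _) hc.continuousAt
  have heq : (fun x => ∫ s in Set.Ioi x, f s)
      = fun x => (∫ s in Set.Ioi a, f s) - ∫ t in a..x, f t := funext key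
  rw [heq]
  exact ((hasDerivAt_const z (∫ s in Set.Ioi a, f s)).sub hd).congr_deriv (zero_sub _)

/-- For convex `Φ` with `exp(−Φ)` integrable on every `(z, ∞)`,
the function `ℓ₂(z) = −log(∫_{(z,∞)} exp(−Φ(s)) ds)` is convex on ℝ. -/
theorem stmt_8 (Φ : ℝ → ℝ) (hΦ : ConvexOn ℝ Set.univ Φ)
    (hint : ∀ z : ℝ, IntegrableOn (fun s => Real.exp (-Φ s)) (Set.Ioi z)) :
    ConvexOn ℝ Set.univ
      (fun z : ℝ => -Real.log (∫ s in Set.Ioi z, Real.exp (-Φ s))) := by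
  set f : ℝ → ℝ := fun s => Real.exp (-Φ s) with hf
  set F : ℝ → ℝ := fun z => ∫ s in Set.Ioi z, f s with hF
  have hΦc : Continuous Φ := by
    rw [← continuousOn_univ]
    exact hΦ.continuousOn isOpen_univ
  have hfc : Continuous f := Real.continuous_exp.comp hΦc.neg
  have hFpos : ∀ z, 0 < F z := by
    intro z
    rw [hF]
    rw [setIntegral_pos_iff_support_of_nonneg_ae
      (Filter.Eventually.of_forall fun s => (Real.exp_pos _).le) (hint z)]
    have hsupp : Function.support f = Set.univ := by
      ext s; simp [hf, Real.exp_ne_zero]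
    rw [hsupp, Set.univ_inter, Real.volume_Ioi]
    exact ENNReal.zero_lt_top
  -- derivative of ℓ₂
  have hder : ∀ z, HasDerivAt (fun z => -Real.log (F z)) (f z / F z) z := by
    intro z
    have hFd : HasDerivAt F (-f z) z := hasDerivAt_tail f hfc hint z
    have hlog : HasDerivAt (fun x => Real.log (F x)) (-f z / F z) z :=
      hFd.log (hFpos z).ne'
    exact hlog.neg.congr_deriv (by ring)
  have hdiff : Differentiable ℝ (fun z => -Real.log (F z)) :=
    fun z => (hder z).differentiableAt
  have hmono : Monotone (deriv (fun z => -Real.log (F z))) := by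
    intro x y hxy
    rw [(hder x).deriv, (hder y).deriv]
    rw [div_le_div_iff₀ (hFpos x) (hFpos y)]
    -- f x * F y ≤ f y * F x
    have hshift : F y = ∫ s in Set.Ioi x, f (s + (y - x)) := shift_Ioi_integral f x y
    have hintshift : IntegrableOn (fun s => f (s + (y - x))) (Set.Ioi x) := by
      rw [← integrable_indicator_iff measurableSet_Ioi]
      have h1 : Integrable ((Set.Ioi y).indicator f) :=
        (integrable_indicator_iff measurableSet_Ioi).2 (hint y)
      have h2 := h1.comp_add_right (y - x)
      apply h2.congr
      refine Filter.Eventually.of_forall fun s => ?_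
      simp only [Set.indicator_apply, Set.mem_Ioi]
      by_cases h : x < s
      · rw [if_pos (by linarith : y < s + (y - x)), if_pos h]
      · rw [if_neg (fun hlt => h (by linarith)), if_neg h]
    calc f x * F y = ∫ s in Set.Ioi x, f x * f (s + (y - x)) := by
          rw [hshift, integral_const_mul]
      _ ≤ ∫ s in Set.Ioi x, f y * f s := by
          refine setIntegral_mono_on (hintshift.const_mul _) ((hint x).const_mul _)
            measurableSet_Ioi fun s hs => ?_
          rw [hf]
          rw [← Real.exp_add, ← Real.exp_add, Real.exp_le_exp]
          have := convex_add_ineq Φ hΦ x y s hxy (le_of_lt hs)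
          linarith
      _ = f y * F x := by rw [integral_const_mul]
  simpa using hmono.convexOn_univ_of_deriv hdiff
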